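/- Let d ≥ 2 and consider the truncated point scheme V_d of S(1,1,1) (the set of d-tuples of nonzero vectors in k³ satisfying the multilinearized relations). A tuple (p₀,…,p_{d−1}) ∈ V_d admits two distinct witnesses (ω, parity-alternative) in the six-family decomposition of V_d — that is, it lies in at least two of the six families — if and only if there exist ω, ω' ∈ k with ω³ = ω'³ = 1 and ω ≠ ω' such that p_j is a nonzero scalar multiple of e_ω for every even j and a nonzero scalar multiple of e_{ω'} for every odd j. In particular, up to independent scaling of the coordinates, the singular locus of V_d consists of exactly six points. -/
import Mathlib


/-!
STATEMENT 12: For `d ≥ 2`, a tuple `(p₀,…,p_{d−1}) ∈ V_d` (for `S(1,1,1)`) admits two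
distinct witnesses `(ω, parity-alternative)` in the six-family decomposition of `V_d`
iff there exist cube roots of unity `ω ≠ ω'` such that `p_j` is a nonzero multiple of
`e_ω` for every even `j` and a nonzero multiple of `e_{ω'}` for every odd `j`.  In
particular the singular locus of `V_d` consists of exactly six points.
-/

/-- `p ∈ L_ω`, the line `x + ω²·y + ω·z = 0`. -/
def memL {k : Type*} [Field k] (ω : k) (p : Fin 3 → k) : Prop :=
  p 0 + ω ^ 2 * p 1 + ω * p 2 = 0

/-- `p` is a nonzero scalar multiple of `e_ω = (1, ω, ω²)`. -/
def isMultE {k : Type*} [Field k] (ω : k) (p : Fin 3 → k) : Prop :=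
  ∃ μ : k, μ ≠ 0 ∧ p 0 = μ ∧ p 1 = μ * ω ∧ p 2 = μ * ω ^ 2

/-- The six families of `V_d`: witness `(ω, alt)` with `ω³ = 1`; if `alt = true` the
even-indexed entries lie on `L_ω` and the odd-indexed ones are multiples of `e_ω`, and
conversely if `alt = false`. -/
def InFamily {k : Type*} [Field k] {d : ℕ} (p : Fin d → Fin 3 → k)
    (ω : k) (alt : Bool) : Prop :=
  ω ^ 3 = 1 ∧
    if alt then
      (∀ j : Fin d, Even j.val → memL ω (p j)) ∧
      (∀ j : Fin d, Odd j.val → isMultE ω (p j))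
    else
      (∀ j : Fin d, Even j.val → isMultE ω (p j)) ∧
      (∀ j : Fin d, Odd j.val → memL ω (p j))


private lemma multE_unique {k : Type*} [Field k] {ω ω' : k} {p : Fin 3 → k}
    (h : isMultE ω p) (h' : isMultE ω' p) : ω = ω' := by
  obtain ⟨μ, hμ, h0, h1, h2⟩ := h
  obtain ⟨ν, hν, h0', h1', h2'⟩ := h'
  have : μ = ν := h0.symm.trans h0'
  subst this
  have : μ * ω = μ * ω' := h1.symm.trans h1'
  exact mul_left_cancel₀ hμ this

private lemma multE_not_memL {k : Type*} [Field k] [CharZero k] {ω : k}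
    (hω : ω ^ 3 = 1) {p : Fin 3 → k} (h : isMultE ω p) : ¬ memL ω p := by
  obtain ⟨μ, hμ, h0, h1, h2⟩ := h
  intro hL
  unfold memL at hL
  rw [h0, h1, h2] at hL
  have : μ * (1 + 2 * ω ^ 3) = 0 := by linear_combination hL
  rw [hω] at this
  have h3 : (1 : k) + 2 * 1 ≠ 0 := by norm_num
  exact hμ ((mul_eq_zero.mp this).resolve_right h3)

private lemma multE_memL {k : Type*} [Field k] {ω ω'' : k}
    (hω : ω ^ 3 = 1) (hω'' : ω'' ^ 3 = 1) (hne : ω ≠ ω'')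
    {p : Fin 3 → k} (h : isMultE ω p) : memL ω'' p := by
  obtain ⟨μ, hμ, h0, h1, h2⟩ := h
  unfold memL
  rw [h0, h1, h2]
  have hsub : ω - ω'' ≠ 0 := sub_ne_zero.mpr hne
  have key : (ω - ω'') * (1 + ω'' ^ 2 * ω + ω'' * ω ^ 2)
      = ω'' * ω ^ 3 - ω * ω'' ^ 3 + (ω - ω'') := by ring
  rw [hω, hω''] at key
  have hS : 1 + ω'' ^ 2 * ω + ω'' * ω ^ 2 = 0 := by
    have := key
    field_simp at this
    exact (mul_eq_zero.mp (by linear_combination key)).resolve_left hsub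
  linear_combination μ * hS

theorem two_witnesses_iff_singular
    (k : Type*) [Field k] [IsAlgClosed k] [CharZero k]
    (d : ℕ) (hd : 2 ≤ d)
    (p : Fin d → Fin 3 → k)
    (hnz : ∀ j : Fin d, p j ≠ 0)
    (hrel : ∀ (i : ℕ) (hi : i + 1 < d),
      p ⟨i + 1, hi⟩ 1 * p ⟨i, by omega⟩ 2 + p ⟨i + 1, hi⟩ 2 * p ⟨i, by omega⟩ 1
          + p ⟨i + 1, hi⟩ 0 * p ⟨i, by omega⟩ 0 = 0 ∧
      p ⟨i + 1, hi⟩ 2 * p ⟨i, by omega⟩ 0 + p ⟨i + 1, hi⟩ 0 * p ⟨i, by omega⟩ 2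
          + p ⟨i + 1, hi⟩ 1 * p ⟨i, by omega⟩ 1 = 0 ∧
      p ⟨i + 1, hi⟩ 0 * p ⟨i, by omega⟩ 1 + p ⟨i + 1, hi⟩ 1 * p ⟨i, by omega⟩ 0
          + p ⟨i + 1, hi⟩ 2 * p ⟨i, by omega⟩ 2 = 0) :
    (∃ w₁ w₂ : k × Bool, w₁ ≠ w₂ ∧
        InFamily p w₁.1 w₁.2 ∧ InFamily p w₂.1 w₂.2)
      ↔ ∃ ω ω' : k, ω ^ 3 = 1 ∧ ω' ^ 3 = 1 ∧ ω ≠ ω' ∧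
          (∀ j : Fin d, Even j.val → isMultE ω (p j)) ∧
          (∀ j : Fin d, Odd j.val → isMultE ω' (p j)) := by
  constructor
  · rintro ⟨⟨ω₁, a₁⟩, ⟨ω₂, a₂⟩, hne, ⟨hω₁, H₁⟩, ⟨hω₂, H₂⟩⟩
    have hd0 : 0 < d := by omega
    have hd1 : 1 < d := by omega
    set j0 : Fin d := ⟨0, hd0⟩ with hj0
    set j1 : Fin d := ⟨1, hd1⟩ with hj1
    have he0 : Even j0.val := ⟨0, rfl⟩
    have ho1 : Odd j1.val := ⟨0, rfl⟩
    match a₁, a₂ with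
    | true, true =>
      simp only [if_true] at H₁ H₂
      have : ω₁ = ω₂ := multE_unique (H₁.2 j1 ho1) (H₂.2 j1 ho1)
      exact absurd (by rw [this]) hne
    | false, false =>
      simp only [if_neg (Bool.false_ne_true ·)] at H₁ H₂
      have : ω₁ = ω₂ := multE_unique (H₁.1 j0 he0) (H₂.1 j0 he0)
      exact absurd (by rw [this]) hne
    | false, true =>
      simp only [if_true, if_neg (Bool.false_ne_true ·)] at H₁ H₂
      refine ⟨ω₁, ω₂, hω₁, hω₂, ?_, H₁.1, H₂.2⟩
      intro heq
      subst heq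
      exact multE_not_memL hω₁ (H₁.1 j0 he0) (H₂.1 j0 he0)
    | true, false =>
      simp only [if_true, if_neg (Bool.false_ne_true ·)] at H₁ H₂
      refine ⟨ω₂, ω₁, hω₂, hω₁, ?_, H₂.1, H₁.2⟩
      intro heq
      subst heq
      exact multE_not_memL hω₂ (H₂.1 j0 he0) (H₁.1 j0 he0)
  · rintro ⟨ω, ω', hω, hω', hne, heven, hodd⟩
    refine ⟨(ω, false), (ω', true), by simp, ⟨hω, ?_⟩, ⟨hω', ?_⟩⟩
    · simp only [if_neg (Bool.false_ne_true ·)]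
      exact ⟨heven, fun j hj => multE_memL hω' hω hne.symm (hodd j hj)⟩
    · simp only [if_true]
      exact ⟨fun j hj => multE_memL hω hω' hne (heven j hj), hodd⟩
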